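/- Let r ∈ (0,1) and α(t) = √(1−r²)w + r cos(2πt)v₁ + r sin(2πt)v₀ for a positively oriented orthonormal basis {v₀,v₁,w}. For the solution operator L = −D_t² + 1 (where D_t is the covariant derivative along α on the round S²), there holds L(α̇) = (4π²(1−r²)+1)·α̇. Equivalently, W(t) = (1 + 4π²(1−r²))⁻¹ α̇(t) is the unique 1-periodic tangent vector field along α solving (−D_t² + 1)W = α̇. -/

import Mathlib

open Real MeasureTheory Filter

noncomputable def dot3 (u v : Fin 3 → ℝ) : ℝ := ∑ i, u i * v i

noncomputable def norm3 (u : Fin 3 → ℝ) : ℝ := Real.sqrt (dot3 u u)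

noncomputable def cross3 (u v : Fin 3 → ℝ) : Fin 3 → ℝ :=
  ![u 1 * v 2 - u 2 * v 1, u 2 * v 0 - u 0 * v 2, u 0 * v 1 - u 1 * v 0]

/-- Projection onto the orthogonal complement of `x`. -/
noncomputable def proj3 (x v : Fin 3 → ℝ) : Fin 3 → ℝ := v - dot3 v x • x

/-- Covariant derivative of a tangent field `V` along a sphere-valued curve `γ`
(tangential projection of the ambient derivative). -/
noncomputable def covDeriv (γ V : ℝ → Fin 3 → ℝ) : ℝ → Fin 3 → ℝ :=
  fun t => proj3 (γ t) (deriv V t)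


lemma dot3_expand (u v : Fin 3 → ℝ) : dot3 u v = u 0 * v 0 + u 1 * v 1 + u 2 * v 2 := by
  simp [dot3, Fin.sum_univ_three]

lemma dot3_add_left (u v x : Fin 3 → ℝ) : dot3 (u + v) x = dot3 u x + dot3 v x := by
  simp [dot3_expand]; ring

lemma dot3_smul_left (a : ℝ) (u x : Fin 3 → ℝ) : dot3 (a • u) x = a * dot3 u x := by
  simp [dot3_expand]; ring

lemma dot3_sub_left (u v x : Fin 3 → ℝ) : dot3 (u - v) x = dot3 u x - dot3 v x := by
  simp [dot3_expand]; ring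

lemma dot3_comm (u v : Fin 3 → ℝ) : dot3 u v = dot3 v u := by
  simp [dot3_expand]; ring

lemma dot3_add_right (u v x : Fin 3 → ℝ) : dot3 x (u + v) = dot3 x u + dot3 x v := by
  simp [dot3_expand]; ring

lemma dot3_smul_right (a : ℝ) (u x : Fin 3 → ℝ) : dot3 x (a • u) = a * dot3 x u := by
  simp [dot3_expand]; ring

lemma dot3_sub_right (u v x : Fin 3 → ℝ) : dot3 x (u - v) = dot3 x u - dot3 x v := by
  simp [dot3_expand]; ring

lemma dot3_self_nonneg (u : Fin 3 → ℝ) : 0 ≤ dot3 u u := by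
  rw [dot3_expand]; nlinarith [sq_nonneg (u 0), sq_nonneg (u 1), sq_nonneg (u 2)]

lemma dot3_self_eq_zero {u : Fin 3 → ℝ} (h : dot3 u u = 0) : u = 0 := by
  rw [dot3_expand] at h
  funext i
  fin_cases i <;> simp <;> nlinarith [sq_nonneg (u 0), sq_nonneg (u 1), sq_nonneg (u 2)]

lemma hasDerivAt_dot3 {f g : ℝ → Fin 3 → ℝ} {f' g' : Fin 3 → ℝ} {t : ℝ}
    (hf : HasDerivAt f f' t) (hg : HasDerivAt g g' t) :
    HasDerivAt (fun s => dot3 (f s) (g s)) (dot3 f' (g t) + dot3 (f t) g') t := by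
  have hfi := hasDerivAt_pi.1 hf
  have hgi := hasDerivAt_pi.1 hg
  have H := (((hfi 0).mul (hgi 0)).add ((hfi 1).mul (hgi 1))).add ((hfi 2).mul (hgi 2))
  have e1 : (fun s => dot3 (f s) (g s)) = fun s => (f s 0 * g s 0 + f s 1 * g s 1) + f s 2 * g s 2 := by
    funext s; rw [dot3_expand]
  rw [e1, dot3_expand, dot3_expand]
  exact H.congr_deriv (by ring)

noncomputable def aα (r : ℝ) (v₀ v₁ w : Fin 3 → ℝ) : ℝ → Fin 3 → ℝ := fun t =>
  Real.sqrt (1 - r ^ 2) • w + (r * Real.cos (2 * π * t)) • v₁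
    + (r * Real.sin (2 * π * t)) • v₀

noncomputable def aV (r : ℝ) (v₀ v₁ : Fin 3 → ℝ) : ℝ → Fin 3 → ℝ := fun t =>
  (-(2 * π * r * Real.sin (2 * π * t))) • v₁ + (2 * π * r * Real.cos (2 * π * t)) • v₀

noncomputable def aA (r : ℝ) (v₀ v₁ : Fin 3 → ℝ) : ℝ → Fin 3 → ℝ := fun t =>
  (-(4 * π ^ 2 * r * Real.cos (2 * π * t))) • v₁ + (-(4 * π ^ 2 * r * Real.sin (2 * π * t))) • v₀

lemma hasDerivAt_lin (t : ℝ) : HasDerivAt (fun s : ℝ => 2 * π * s) (2 * π) t := by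
  simpa using (hasDerivAt_id t).const_mul (2 * π)

lemma hasDerivAt_aα (r : ℝ) (v₀ v₁ w : Fin 3 → ℝ) (t : ℝ) :
    HasDerivAt (aα r v₀ v₁ w) (aV r v₀ v₁ t) t := by
  have hc : HasDerivAt (fun s : ℝ => r * Real.cos (2 * π * s))
      (-(2 * π * r * Real.sin (2 * π * t))) t := by
    have := ((Real.hasDerivAt_cos (2 * π * t)).comp t (hasDerivAt_lin t)).const_mul r
    exact this.congr_deriv (by ring)
  have hs : HasDerivAt (fun s : ℝ => r * Real.sin (2 * π * s))
      (2 * π * r * Real.cos (2 * π * t)) t := by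
    have := ((Real.hasDerivAt_sin (2 * π * t)).comp t (hasDerivAt_lin t)).const_mul r
    exact this.congr_deriv (by ring)
  have := ((hasDerivAt_const t (Real.sqrt (1 - r ^ 2) • w)).add (hc.smul_const v₁)).add
    (hs.smul_const v₀)
  exact this.congr_deriv (by simp [aV])

lemma hasDerivAt_aV (r : ℝ) (v₀ v₁ : Fin 3 → ℝ) (t : ℝ) :
    HasDerivAt (aV r v₀ v₁) (aA r v₀ v₁ t) t := by
  have hc : HasDerivAt (fun s : ℝ => -(2 * π * r * Real.sin (2 * π * s)))
      (-(4 * π ^ 2 * r * Real.cos (2 * π * t))) t := by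
    have := (((Real.hasDerivAt_sin (2 * π * t)).comp t (hasDerivAt_lin t)).const_mul (2 * π * r)).neg
    exact this.congr_deriv (by ring)
  have hs : HasDerivAt (fun s : ℝ => 2 * π * r * Real.cos (2 * π * s))
      (-(4 * π ^ 2 * r * Real.sin (2 * π * t))) t := by
    have := ((Real.hasDerivAt_cos (2 * π * t)).comp t (hasDerivAt_lin t)).const_mul (2 * π * r)
    exact this.congr_deriv (by ring)
  exact (hc.smul_const v₁).add (hs.smul_const v₀)

lemma deriv_aα (r : ℝ) (v₀ v₁ w : Fin 3 → ℝ) : deriv (aα r v₀ v₁ w) = aV r v₀ v₁ := by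
  funext t; exact (hasDerivAt_aα r v₀ v₁ w t).deriv

lemma periodic_aα (r : ℝ) (v₀ v₁ w : Fin 3 → ℝ) : Function.Periodic (aα r v₀ v₁ w) 1 := by
  intro t
  have h : 2 * π * (t + 1) = 2 * π * t + 2 * π := by ring
  simp [aα, h, Real.sin_add_two_pi, Real.cos_add_two_pi]

lemma periodic_aA (r : ℝ) (v₀ v₁ : Fin 3 → ℝ) : Function.Periodic (aA r v₀ v₁) 1 := by
  intro t
  have h : 2 * π * (t + 1) = 2 * π * t + 2 * π := by ring
  simp [aA, h, Real.sin_add_two_pi, Real.cos_add_two_pi]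

lemma periodic_aV (r : ℝ) (v₀ v₁ : Fin 3 → ℝ) : Function.Periodic (aV r v₀ v₁) 1 := by
  intro t
  have h : 2 * π * (t + 1) = 2 * π * t + 2 * π := by ring
  simp [aV, h, Real.sin_add_two_pi, Real.cos_add_two_pi]

noncomputable def aB (r : ℝ) (v₀ v₁ w : Fin 3 → ℝ) : ℝ → Fin 3 → ℝ := fun t =>
  aA r v₀ v₁ t + (4 * π ^ 2 * r ^ 2) • aα r v₀ v₁ w t

lemma hasDerivAt_aA (r : ℝ) (v₀ v₁ : Fin 3 → ℝ) (t : ℝ) :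
    HasDerivAt (aA r v₀ v₁)
      ((8 * π ^ 3 * r * Real.sin (2 * π * t)) • v₁ + (-(8 * π ^ 3 * r * Real.cos (2 * π * t))) • v₀) t := by
  have hc : HasDerivAt (fun s : ℝ => -(4 * π ^ 2 * r * Real.cos (2 * π * s)))
      (8 * π ^ 3 * r * Real.sin (2 * π * t)) t := by
    have := (((Real.hasDerivAt_cos (2 * π * t)).comp t (hasDerivAt_lin t)).const_mul (4 * π ^ 2 * r)).neg
    exact this.congr_deriv (by ring)
  have hs : HasDerivAt (fun s : ℝ => -(4 * π ^ 2 * r * Real.sin (2 * π * s)))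
      (-(8 * π ^ 3 * r * Real.cos (2 * π * t))) t := by
    have := (((Real.hasDerivAt_sin (2 * π * t)).comp t (hasDerivAt_lin t)).const_mul (4 * π ^ 2 * r)).neg
    exact this.congr_deriv (by ring)
  exact (hc.smul_const v₁).add (hs.smul_const v₀)

lemma hasDerivAt_aB (r : ℝ) (v₀ v₁ w : Fin 3 → ℝ) (t : ℝ) :
    HasDerivAt (aB r v₀ v₁ w) ((-(4 * π ^ 2 * (1 - r ^ 2))) • aV r v₀ v₁ t) t := by
  have := (hasDerivAt_aA r v₀ v₁ t).add ((hasDerivAt_aα r v₀ v₁ w t).const_smul (4 * π ^ 2 * r ^ 2))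
  exact this.congr_deriv (by simp only [aV, smul_add, smul_smul]; module)

section Ortho
set_option linter.unusedSectionVars false
variable {r : ℝ} {v₀ v₁ w : Fin 3 → ℝ}
variable (hr : 0 < r) (hr1 : r < 1)
variable (h00 : dot3 v₀ v₀ = 1) (h11 : dot3 v₁ v₁ = 1) (hww : dot3 w w = 1)
variable (h01 : dot3 v₀ v₁ = 0) (h0w : dot3 v₀ w = 0) (h1w : dot3 v₁ w = 0)

include h00 h11 hww h01 h0w h1w hr hr1

lemma dot_aα_aα (t : ℝ) : dot3 (aα r v₀ v₁ w t) (aα r v₀ v₁ w t) = 1 := by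
  have h10 : dot3 v₁ v₀ = 0 := by rw [dot3_comm]; exact h01
  have hw0 : dot3 w v₀ = 0 := by rw [dot3_comm]; exact h0w
  have hw1 : dot3 w v₁ = 0 := by rw [dot3_comm]; exact h1w
  have hs : Real.sqrt (1 - r ^ 2) * Real.sqrt (1 - r ^ 2) = 1 - r ^ 2 :=
    Real.mul_self_sqrt (by nlinarith : (0:ℝ) ≤ 1 - r ^ 2)
  have hsc := Real.sin_sq_add_cos_sq (2 * π * t)
  simp only [aα, dot3_add_left, dot3_add_right, dot3_smul_left, dot3_smul_right,
    h00, h11, hww, h01, h0w, h1w, h10, hw0, hw1]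
  linear_combination hs + r ^ 2 * hsc

lemma dot_aV_aα (t : ℝ) : dot3 (aV r v₀ v₁ t) (aα r v₀ v₁ w t) = 0 := by
  have h10 : dot3 v₁ v₀ = 0 := by rw [dot3_comm]; exact h01
  simp only [aα, aV, dot3_add_left, dot3_add_right, dot3_smul_left, dot3_smul_right,
    h00, h11, h01, h10, h0w, h1w]
  ring

lemma dot_aA_aα (t : ℝ) : dot3 (aA r v₀ v₁ t) (aα r v₀ v₁ w t) = -(4 * π ^ 2 * r ^ 2) := by
  have h10 : dot3 v₁ v₀ = 0 := by rw [dot3_comm]; exact h01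
  have hsc := Real.sin_sq_add_cos_sq (2 * π * t)
  simp only [aα, aA, dot3_add_left, dot3_add_right, dot3_smul_left, dot3_smul_right,
    h00, h11, h01, h0w, h1w, h10]
  linear_combination (-(4 * π ^ 2 * r ^ 2)) * hsc


noncomputable def covDeriv' (γ V : ℝ → Fin 3 → ℝ) : ℝ → Fin 3 → ℝ :=
  fun t => deriv V t - dot3 (deriv V t) (γ t) • γ t

lemma cov1 : covDeriv' (aα r v₀ v₁ w) (deriv (aα r v₀ v₁ w)) = aB r v₀ v₁ w := by
  funext t
  rw [covDeriv', deriv_aα, (hasDerivAt_aV r v₀ v₁ t).deriv,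
    dot_aA_aα hr hr1 h00 h11 hww h01 h0w h1w, aB, neg_smul, sub_neg_eq_add]

lemma cov2 (t : ℝ) : covDeriv' (aα r v₀ v₁ w) (aB r v₀ v₁ w) t
    = (-(4 * π ^ 2 * (1 - r ^ 2))) • aV r v₀ v₁ t := by
  rw [covDeriv', (hasDerivAt_aB r v₀ v₁ w t).deriv, dot3_smul_left,
    dot_aV_aα hr hr1 h00 h11 hww h01 h0w h1w]
  simp

lemma part1 (t : ℝ) : -(covDeriv' (aα r v₀ v₁ w) (covDeriv' (aα r v₀ v₁ w) (deriv (aα r v₀ v₁ w))) t)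
    + deriv (aα r v₀ v₁ w) t = (4 * π ^ 2 * (1 - r ^ 2) + 1) • deriv (aα r v₀ v₁ w) t := by
  rw [cov1 hr hr1 h00 h11 hww h01 h0w h1w, cov2 hr hr1 h00 h11 hww h01 h0w h1w, deriv_aα]
  module

end Ortho

lemma periodic_deriv' {E : Type*} [NormedAddCommGroup E] [NormedSpace ℝ E]
    {f : ℝ → E} (hf : Function.Periodic f 1) : Function.Periodic (deriv f) 1 := by
  intro t
  have h1 : (fun x : ℝ => f (x + 1)) = f := funext fun s => hf s
  calc deriv f (t + 1) = deriv (fun x : ℝ => f (x + 1)) t := (deriv_comp_add_const f 1 t).symm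
    _ = deriv f t := by rw [h1]

lemma monotone_periodic_const {f : ℝ → ℝ} (hm : Monotone f) (hp : Function.Periodic f 1)
    (x y : ℝ) : f x = f y := by
  have hn : ∀ (n : ℕ) (z : ℝ), f (z + n) = f z := by
    intro n
    induction n with
    | zero => simp
    | succ k ih =>
      intro z
      have h2 : z + ((k : ℝ) + 1) = z + k + 1 := by ring
      push_cast
      rw [h2, hp (z + k), ih]
  rcases le_total x y with hxy | hxy
  · obtain ⟨n, hn'⟩ := exists_nat_ge (y - x)
    have h1 : f x ≤ f y := hm hxy
    have h2 : f y ≤ f (x + n) := hm (by linarith)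
    rw [hn n x] at h2
    linarith
  · obtain ⟨n, hn'⟩ := exists_nat_ge (x - y)
    have h1 : f y ≤ f x := hm hxy
    have h2 : f x ≤ f (y + n) := hm (by linarith)
    rw [hn n y] at h2
    linarith

lemma periodic_subsol_zero {g g1 h : ℝ → ℝ}
    (hg : ∀ t, HasDerivAt g (g1 t) t) (hg1 : ∀ t, HasDerivAt g1 (h t) t)
    (hpos : ∀ t, 0 ≤ g t) (hsub : ∀ t, 2 * g t ≤ h t)
    (hper : Function.Periodic g 1) (hper1 : Function.Periodic g1 1) :
    ∀ t, g t = 0 := by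
  have hmono : Monotone g1 :=
    monotone_of_deriv_nonneg (fun t => (hg1 t).differentiableAt)
      (fun t => by rw [(hg1 t).deriv]; linarith [hpos t, hsub t])
  have hconst : ∀ t, g1 t = g1 0 := fun t => monotone_periodic_const hmono hper1 t 0
  set K := g1 0 with hK
  have hq : ∀ t, HasDerivAt (fun s => g s - K * s) 0 t := by
    intro t
    have h2 := (hg t).sub ((hasDerivAt_id t).const_mul K)
    have h3 : g1 t - K * 1 = 0 := by rw [hconst t]; ring
    rw [h3] at h2
    exact h2
  have hqc : ∀ x y : ℝ, g x - K * x = g y - K * y := fun x y =>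
    is_const_of_deriv_eq_zero (fun t => (hq t).differentiableAt) (fun t => (hq t).deriv) x y
  have hK0 : K = 0 := by
    have e1 := hqc 1 0
    have e2 := hper 0
    simp at e1 e2
    linarith
  have hg1zero : ∀ t, g1 t = 0 := fun t => by rw [hconst t, hK0]
  have hhzero : ∀ t, h t = 0 := by
    intro t
    have h2 : g1 = fun _ => (0:ℝ) := funext hg1zero
    have h3 := hg1 t
    rw [h2] at h3
    exact h3.unique (hasDerivAt_const t 0)
  intro t
  have := hsub t
  rw [hhzero t] at this
  linarith [hpos t]

section Part2
variable {r : ℝ} {v₀ v₁ w : Fin 3 → ℝ}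
variable (hr : 0 < r) (hr1 : r < 1)
variable (h00 : dot3 v₀ v₀ = 1) (h11 : dot3 v₁ v₁ = 1) (hww : dot3 w w = 1)
variable (h01 : dot3 v₀ v₁ = 0) (h0w : dot3 v₀ w = 0) (h1w : dot3 v₁ w = 0)
set_option linter.unusedSectionVars false

include hr hr1 h00 h11 hww h01 h0w h1w in
lemma part2 (W : ℝ → Fin 3 → ℝ) (hW2 : ContDiff ℝ 2 W)
    (htan : ∀ t, dot3 (W t) (aα r v₀ v₁ w t) = 0)
    (hWper : Function.Periodic W 1)
    (heq : ∀ t, -(covDeriv' (aα r v₀ v₁ w) (covDeriv' (aα r v₀ v₁ w) W) t) + W t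
      = deriv (aα r v₀ v₁ w) t) :
    ∀ t, W t = (1 + 4 * π ^ 2 * (1 - r ^ 2))⁻¹ • deriv (aα r v₀ v₁ w) t := by
  have hπ : (0:ℝ) < π := Real.pi_pos
  set c : ℝ := (1 + 4 * π ^ 2 * (1 - r ^ 2))⁻¹ with hc
  have hden : (0:ℝ) < 1 + 4 * π ^ 2 * (1 - r ^ 2) := by nlinarith [sq_nonneg π, mul_pos (mul_pos (by norm_num : (0:ℝ)<4) (pow_pos hπ 2)) (by nlinarith : (0:ℝ) < 1 - r ^ 2)]
  have hc1 : c * (4 * π ^ 2 * (1 - r ^ 2)) + c = 1 := by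
    rw [hc]; field_simp; ring
  -- differentiability of W
  have hWd : Differentiable ℝ W := hW2.differentiable (by norm_num)
  have hW2' : ContDiff ℝ (1 + 1) W := by norm_num at hW2 ⊢; exact hW2
  have hW1 : ContDiff ℝ 1 (deriv W) := (contDiff_succ_iff_deriv.mp hW2').2.2
  have hWd' : Differentiable ℝ (deriv W) := hW1.differentiable one_ne_zero
  set α : ℝ → Fin 3 → ℝ := aα r v₀ v₁ w with hα
  set Vt : ℝ → Fin 3 → ℝ := aV r v₀ v₁ with hVt
  set U : ℝ → Fin 3 → ℝ := fun s => W s - c • Vt s with hU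
  set DU1 : ℝ → Fin 3 → ℝ := fun s => deriv W s - c • aA r v₀ v₁ s with hDU1
  have hdU : ∀ s, HasDerivAt U (DU1 s) s := fun s =>
    ((hWd s).hasDerivAt).sub ((hasDerivAt_aV r v₀ v₁ s).const_smul c)
  set DU2 : ℝ → Fin 3 → ℝ := fun s => deriv (deriv W) s
      - c • ((8 * π ^ 3 * r * Real.sin (2 * π * s)) • v₁
        + (-(8 * π ^ 3 * r * Real.cos (2 * π * s))) • v₀) with hDU2
  have hdDU1 : ∀ s, HasDerivAt DU1 (DU2 s) s := fun s =>
    ((hWd' s).hasDerivAt).sub ((hasDerivAt_aA r v₀ v₁ s).const_smul c)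
  have hVα : ∀ s, dot3 (Vt s) (α s) = 0 := fun s => dot_aV_aα hr hr1 h00 h11 hww h01 h0w h1w s
  have hαα : ∀ s, dot3 (α s) (α s) = 1 := fun s => dot_aα_aα hr hr1 h00 h11 hww h01 h0w h1w s
  have htanU : ∀ s, dot3 (U s) (α s) = 0 := by
    intro s
    rw [hU]
    simp only [dot3_sub_left, dot3_smul_left]
    rw [htan s, hVα s]
    ring
  set φ : ℝ → ℝ := fun s => dot3 (DU1 s) (α s) with hφdef
  have hφ : ∀ s, dot3 (U s) (Vt s) = -φ s := by
    intro s
    have hzero : (fun s => dot3 (U s) (α s)) = fun _ => (0:ℝ) := funext htanU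
    have hder := hasDerivAt_dot3 (hdU s) (hasDerivAt_aα r v₀ v₁ w s)
    rw [hzero] at hder
    have h5 := hder.unique (hasDerivAt_const s 0)
    rw [hφdef]
    linarith [h5]
  have hDDW : ∀ s, covDeriv' α (covDeriv' α W) s = W s - Vt s := by
    intro s
    have h' := heq s
    rw [deriv_aα] at h'
    calc covDeriv' α (covDeriv' α W) s
        = -(-(covDeriv' α (covDeriv' α W) s) + W s) + W s := by abel
      _ = -(Vt s) + W s := by rw [h']
      _ = W s - Vt s := by abel
  set φW : ℝ → ℝ := fun s => dot3 (deriv W s) (α s) with hφW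
  have hcovW : covDeriv' α W = fun s => deriv W s - φW s • α s := rfl
  have hdφW : ∀ s, HasDerivAt φW (dot3 (deriv (deriv W) s) (α s) + dot3 (deriv W s) (Vt s)) s :=
    fun s => hasDerivAt_dot3 ((hWd' s).hasDerivAt) (hasDerivAt_aα r v₀ v₁ w s)
  have hdQW : ∀ s, HasDerivAt (covDeriv' α W)
      (deriv (deriv W) s - (φW s • Vt s
        + (dot3 (deriv (deriv W) s) (α s) + dot3 (deriv W s) (Vt s)) • α s)) s := by
    intro s
    rw [hcovW]
    exact ((hWd' s).hasDerivAt).sub ((hdφW s).smul (hasDerivAt_aα r v₀ v₁ w s))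
  set P : ℝ → Fin 3 → ℝ := fun s => DU1 s - φ s • α s with hP
  have hcovU : covDeriv' α U = P := by
    funext s
    rw [hP]
    show deriv U s - dot3 (deriv U s) (α s) • α s = DU1 s - φ s • α s
    rw [(hdU s).deriv, hφdef]
  have hPQ : P = fun s => covDeriv' α W s - c • aB r v₀ v₁ w s := by
    funext s
    rw [hP, hcovW]
    show DU1 s - φ s • α s = (deriv W s - φW s • α s) - c • aB r v₀ v₁ w s
    rw [hφdef, hDU1, hφW, aB]
    simp only [dot3_sub_left, dot3_smul_left, dot_aA_aα hr hr1 h00 h11 hww h01 h0w h1w]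
    rw [show dot3 (aA r v₀ v₁ s) (α s) = -(4 * π ^ 2 * r ^ 2) from dot_aA_aα hr hr1 h00 h11 hww h01 h0w h1w s]
    module
  have hdφ : ∀ s, HasDerivAt φ (dot3 (DU2 s) (α s) + dot3 (DU1 s) (Vt s)) s :=
    fun s => hasDerivAt_dot3 (hdDU1 s) (hasDerivAt_aα r v₀ v₁ w s)
  have hdP1 : ∀ s, HasDerivAt P
      (DU2 s - (φ s • Vt s + (dot3 (DU2 s) (α s) + dot3 (DU1 s) (Vt s)) • α s)) s := by
    intro s
    rw [hP]
    exact (hdDU1 s).sub ((hdφ s).smul (hasDerivAt_aα r v₀ v₁ w s))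
  have hdP2 : ∀ s, HasDerivAt P
      ((deriv (deriv W) s - (φW s • Vt s
        + (dot3 (deriv (deriv W) s) (α s) + dot3 (deriv W s) (Vt s)) • α s))
        - c • ((-(4 * π ^ 2 * (1 - r ^ 2))) • Vt s)) s := by
    intro s
    rw [hPQ]
    exact (hdQW s).sub ((hasDerivAt_aB r v₀ v₁ w s).const_smul c)
  have hD2U : ∀ s, covDeriv' α P s = U s := by
    intro s
    have hkey := hDDW s
    simp only [covDeriv'] at hkey ⊢
    rw [(hdQW s).deriv] at hkey
    rw [(hdP2 s).deriv]
    simp only [dot3_sub_left, dot3_add_left, dot3_smul_left, hVα s, hαα s, mul_zero, mul_one,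
      sub_zero] at hkey ⊢
    rw [hU]
    linear_combination (norm := module) hkey + hc1 • Vt s
  have hscal : ∀ s, dot3 (DU2 s) (U s) = dot3 (U s) (U s) - φ s ^ 2 := by
    intro s
    have hkey := hD2U s
    simp only [covDeriv'] at hkey
    rw [(hdP1 s).deriv] at hkey
    have h6 := congrArg (fun v => dot3 v (U s)) hkey
    simp only [dot3_sub_left, dot3_add_left, dot3_smul_left] at h6
    have hαU : dot3 (α s) (U s) = 0 := by rw [dot3_comm]; exact htanU s
    have hVU : dot3 (Vt s) (U s) = -φ s := by rw [dot3_comm]; exact hφ s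
    rw [hαU, hVU] at h6
    linear_combination h6
  have hCS : ∀ s, φ s ^ 2 ≤ dot3 (DU1 s) (DU1 s) := by
    intro s
    have h0 := dot3_self_nonneg (DU1 s - φ s • α s)
    have hαD : dot3 (α s) (DU1 s) = φ s := by rw [dot3_comm, hφdef]
    have hDα : dot3 (DU1 s) (α s) = φ s := by rw [hφdef]
    simp only [dot3_sub_left, dot3_sub_right, dot3_smul_left, dot3_smul_right, hαα s,
      hαD, hDα] at h0
    nlinarith [h0]
  set g : ℝ → ℝ := fun s => dot3 (U s) (U s) with hgdef
  set g1 : ℝ → ℝ := fun s => 2 * dot3 (DU1 s) (U s) with hg1def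
  have hdg : ∀ s, HasDerivAt g (g1 s) s := by
    intro s
    have h2 := hasDerivAt_dot3 (hdU s) (hdU s)
    have e : dot3 (DU1 s) (U s) + dot3 (U s) (DU1 s) = g1 s := by
      rw [hg1def, dot3_comm (U s) (DU1 s)]; ring
    rw [← e]
    exact h2
  have hdg1 : ∀ s, HasDerivAt g1 (2 * (dot3 (DU2 s) (U s) + dot3 (DU1 s) (DU1 s))) s := by
    intro s
    exact (hasDerivAt_dot3 (hdDU1 s) (hdU s)).const_mul 2
  have hdWper : Function.Periodic (deriv W) 1 := periodic_deriv' hWper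
  have hUper : Function.Periodic U 1 := by
    intro s
    show W (s + 1) - c • Vt (s + 1) = W s - c • Vt s
    rw [hWper s, hVt, periodic_aV r v₀ v₁ s]
  have hDU1per : Function.Periodic DU1 1 := by
    intro s
    show deriv W (s + 1) - c • aA r v₀ v₁ (s + 1) = deriv W s - c • aA r v₀ v₁ s
    rw [hdWper s, periodic_aA r v₀ v₁ s]
  have hgper : Function.Periodic g 1 := by
    intro s
    show dot3 (U (s + 1)) (U (s + 1)) = dot3 (U s) (U s)
    rw [hUper s]
  have hg1per : Function.Periodic g1 1 := by
    intro s
    show 2 * dot3 (DU1 (s + 1)) (U (s + 1)) = 2 * dot3 (DU1 s) (U s)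
    rw [hUper s, hDU1per s]
  have hsub : ∀ s, 2 * g s ≤ 2 * (dot3 (DU2 s) (U s) + dot3 (DU1 s) (DU1 s)) := by
    intro s
    show 2 * dot3 (U s) (U s) ≤ _
    linarith [hscal s, hCS s]
  have hg0 := periodic_subsol_zero
    (h := fun s => 2 * (dot3 (DU2 s) (U s) + dot3 (DU1 s) (DU1 s)))
    hdg hdg1 (fun s => dot3_self_nonneg (U s)) hsub hgper hg1per
  intro t
  have hU0 : U t = 0 := dot3_self_eq_zero (hg0 t)
  have hW0 : W t = c • Vt t := by
    have h9 : W t - c • Vt t = 0 := hU0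
    linear_combination (norm := module) h9
  rw [deriv_aα]
  exact hW0

end Part2


theorem stmt13 (r : ℝ) (hr : 0 < r) (hr1 : r < 1)
    (v₀ v₁ w : Fin 3 → ℝ)
    (h00 : dot3 v₀ v₀ = 1) (h11 : dot3 v₁ v₁ = 1) (hww : dot3 w w = 1)
    (h01 : dot3 v₀ v₁ = 0) (h0w : dot3 v₀ w = 0) (h1w : dot3 v₁ w = 0)
    (horient : cross3 v₁ v₀ = w) :
    let α : ℝ → Fin 3 → ℝ := fun t =>
      Real.sqrt (1 - r ^ 2) • w + (r * Real.cos (2 * π * t)) • v₁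
        + (r * Real.sin (2 * π * t)) • v₀
    (∀ t, -(covDeriv α (covDeriv α (deriv α)) t) + deriv α t
        = (4 * π ^ 2 * (1 - r ^ 2) + 1) • deriv α t) ∧
    (∀ W : ℝ → Fin 3 → ℝ, ContDiff ℝ 2 W → (∀ t, dot3 (W t) (α t) = 0) →
      Function.Periodic W 1 →
      (∀ t, -(covDeriv α (covDeriv α W) t) + W t = deriv α t) →
      ∀ t, W t = (1 + 4 * π ^ 2 * (1 - r ^ 2))⁻¹ • deriv α t) := by
  intro α
  refine ⟨fun t => part1 hr hr1 h00 h11 hww h01 h0w h1w t,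
    fun W hW2 htan hWper heq t => part2 hr hr1 h00 h11 hww h01 h0w h1w W hW2 htan hWper heq t⟩
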